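/- Let τ1, τ2, τ3, τ4 > 0 and α_min, β_min, γ_min > 0 with α_min + β_min + γ_min < 1. With z_λ = max{(2τ1/λ)^{1/3}, α_min} + max{β_λ, β_min} + max{(2τ4/λ)^{1/3}, γ_min} (where β_λ is the unique zero on (0,∞) of g_λ(β) = τ2·2^{τ3/β}·(1 − τ3·ln 2/β) − τ2 + λ), the map λ ↦ z_λ is continuous on (0, ∞), z_λ → ∞ as λ → 0⁺, and z_λ → α_min + β_min + γ_min as λ → ∞. Consequently there exists λ* > 0 with z_{λ*} = 1. -/

import Mathlib

open Filter Set

private lemma hfun_strictAnti : StrictAntiOn (fun u : ℝ => Real.exp u * (1 - u)) (Set.Ici 0) := by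
  apply strictAntiOn_of_deriv_neg (convex_Ici 0)
  · exact (Real.continuous_exp.mul (continuous_const.sub continuous_id)).continuousOn
  · intro x hx
    rw [interior_Ici] at hx
    have hd : HasDerivAt (fun u : ℝ => Real.exp u * (1 - u)) (-(x * Real.exp x)) x := by
      have : HasDerivAt (fun u : ℝ => Real.exp u * (1 - u)) (Real.exp x * (1 - x) + Real.exp x * -1) x :=
        (Real.hasDerivAt_exp x).mul ((hasDerivAt_id x).const_sub 1)
      convert this using 1
      show -(x * Real.exp x) = Real.exp x * (1 - x) + Real.exp x * -1
      ring
    rw [hd.deriv]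
    have hx' : (0:ℝ) < x := hx
    have := Real.exp_pos x
    nlinarith

private lemma hfun_lt_one {u : ℝ} (hu : 0 < u) : Real.exp u * (1 - u) < 1 := by
  have := hfun_strictAnti (Set.self_mem_Ici) (Set.mem_Ici.mpr hu.le) hu
  simpa using this

/-- The map `λ ↦ z_λ`, where
`z_λ = max{(2τ1/λ)^{1/3}, α_min} + max{β_λ, β_min} + max{(2τ4/λ)^{1/3}, γ_min}`
and `β_λ` is the unique positive zero of `g_λ`, is continuous on `(0,∞)`, tends
to `∞` as `λ → 0⁺` and to `α_min + β_min + γ_min < 1` as `λ → ∞`; consequently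
some `λ* > 0` satisfies `z_{λ*} = 1`. -/
theorem fast_exists_multiplier
    (τ1 τ2 τ3 τ4 αmin βmin γmin : ℝ)
    (h1 : 0 < τ1) (h2 : 0 < τ2) (h3 : 0 < τ3) (h4 : 0 < τ4)
    (hαmin : 0 < αmin) (hβmin : 0 < βmin) (hγmin : 0 < γmin)
    (hsum : αmin + βmin + γmin < 1)
    (βof : ℝ → ℝ)
    (hβof : ∀ lam : ℝ, 0 < lam → 0 < βof lam ∧
      τ2 * (2 : ℝ) ^ (τ3 / βof lam) * (1 - τ3 * Real.log 2 / βof lam) - τ2 + lam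
        = 0)
    (z : ℝ → ℝ)
    (hz : ∀ lam : ℝ, z lam
      = max ((2 * τ1 / lam) ^ ((1 : ℝ) / 3)) αmin + max (βof lam) βmin +
          max ((2 * τ4 / lam) ^ ((1 : ℝ) / 3)) γmin) :
    ContinuousOn z (Set.Ioi (0 : ℝ)) ∧
    Filter.Tendsto z (nhdsWithin 0 (Set.Ioi (0 : ℝ))) Filter.atTop ∧
    Filter.Tendsto z Filter.atTop (nhds (αmin + βmin + γmin)) ∧
    ∃ lam : ℝ, 0 < lam ∧ z lam = 1 := by
  set c : ℝ := τ3 * Real.log 2 with hc_def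
  have hlog2 : 0 < Real.log 2 := Real.log_pos (by norm_num)
  have hc : 0 < c := mul_pos h3 hlog2
  set h : ℝ → ℝ := fun u => Real.exp u * (1 - u) with hh_def
  have hA : StrictAntiOn h (Set.Ici 0) := hfun_strictAnti
  -- key rewrite
  have Kβ : ∀ x : ℝ, 0 < x →
      τ2 * (2 : ℝ) ^ (τ3 / x) * (1 - τ3 * Real.log 2 / x) - τ2
        = τ2 * (h (c / x) - 1) := by
    intro x hx
    rw [Real.rpow_def_of_pos (by norm_num : (0:ℝ) < 2)]
    have harg : Real.log 2 * (τ3 / x) = c / x := by rw [hc_def]; ring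
    rw [harg, hh_def, hc_def]
    simp only
    ring
  have hβpos : ∀ lam : ℝ, 0 < lam → 0 < βof lam := fun lam hl => (hβof lam hl).1
  have heq : ∀ lam : ℝ, 0 < lam → h (c / βof lam) = 1 - lam / τ2 := by
    intro lam hl
    have h0 := (hβof lam hl).2
    rw [Kβ (βof lam) (hβpos lam hl)] at h0
    field_simp
    linarith
  -- strict antitonicity of βof
  have hanti : ∀ l1 l2 : ℝ, 0 < l1 → l1 < l2 → βof l2 < βof l1 := by
    intro l1 l2 hl1 hlt
    have hl2 : 0 < l2 := hl1.trans hlt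
    have hb1 := hβpos l1 hl1
    have hb2 := hβpos l2 hl2
    have hv : h (c / βof l2) < h (c / βof l1) := by
      rw [heq l1 hl1, heq l2 hl2]
      have : l1 / τ2 < l2 / τ2 := div_lt_div_of_pos_right hlt h2
      linarith
    have hmem1 : c / βof l1 ∈ Set.Ici (0:ℝ) := Set.mem_Ici.mpr (by positivity)
    have hmem2 : c / βof l2 ∈ Set.Ici (0:ℝ) := Set.mem_Ici.mpr (by positivity)
    have hdiv : c / βof l1 < c / βof l2 := (hA.lt_iff_gt hmem2 hmem1).mp hv
    have := (div_lt_div_iff₀ hb1 hb2).mp hdiv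
    exact lt_of_mul_lt_mul_left (by linarith [this]) hc.le
  -- surjectivity of βof onto Ioi 0
  have hsurj : ∀ b : ℝ, 0 < b → ∃ lam : ℝ, 0 < lam ∧ βof lam = b := by
    intro b hb
    have hub : 0 < c / b := by positivity
    have hlt1 : h (c / b) < 1 := hfun_lt_one hub
    refine ⟨τ2 * (1 - h (c / b)), by nlinarith, ?_⟩
    set lam := τ2 * (1 - h (c / b)) with hlam_def
    have hlampos : 0 < lam := by rw [hlam_def]; nlinarith
    have he := heq lam hlampos
    have hval : (1 : ℝ) - lam / τ2 = h (c / b) := by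
      rw [hlam_def]; field_simp; ring
    rw [hval] at he
    have hbl := hβpos lam hlampos
    have hmem1 : c / βof lam ∈ Set.Ici (0:ℝ) := Set.mem_Ici.mpr (by positivity)
    have hmem2 : c / b ∈ Set.Ici (0:ℝ) := Set.mem_Ici.mpr hub.le
    have hdiv : c / βof lam = c / b := hA.injOn hmem1 hmem2 he
    have := (div_eq_div_iff (by positivity) hb.ne').mp hdiv
    exact mul_left_cancel₀ hc.ne' (by linarith [this])
  -- continuity of βof on Ioi 0
  have hβcont : ContinuousOn βof (Set.Ioi (0:ℝ)) := by
    intro a ha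
    have ha' : (0:ℝ) < a := ha
    have hmono : StrictMonoOn (fun lam => -βof lam) (Set.Ioi (0:ℝ)) := by
      intro x hx y hy hxy
      simp only [neg_lt_neg_iff]
      exact hanti x y hx hxy
    have himg : (fun lam => -βof lam) '' Set.Ioi (0:ℝ) = Set.Iio (0:ℝ) := by
      ext y
      constructor
      · rintro ⟨x, hx, rfl⟩
        simpa using hβpos x hx
      · intro hy
        obtain ⟨lam, hlam, hbl⟩ := hsurj (-y) (by simpa using hy)
        exact ⟨lam, hlam, by show -βof lam = y; rw [hbl]; ring⟩
    have hca : ContinuousAt (fun lam => -βof lam) a := by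
      apply hmono.continuousAt_of_image_mem_nhds (isOpen_Ioi.mem_nhds ha)
      rw [himg]
      exact isOpen_Iio.mem_nhds (by simpa using hβpos a ha')
    have : ContinuousAt βof a := by
      have := hca.neg
      convert this using 1; funext x; simp
    exact this.continuousWithinAt
  -- continuity of z
  have hroot : ∀ τ : ℝ, ContinuousOn (fun lam : ℝ => (2 * τ / lam) ^ ((1:ℝ)/3)) (Set.Ioi (0:ℝ)) := by
    intro τ
    apply ContinuousOn.rpow_const
    · exact continuousOn_const.div continuousOn_id (fun x hx => ne_of_gt hx)
    · intro x _; right; norm_num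
  have hmaxc : ∀ {f : ℝ → ℝ} {k : ℝ}, ContinuousOn f (Set.Ioi (0:ℝ)) →
      ContinuousOn (fun x => max (f x) k) (Set.Ioi (0:ℝ)) := fun hf =>
    continuous_max.comp_continuousOn (hf.prodMk continuousOn_const)
  have hwcont : ContinuousOn z (Set.Ioi (0:ℝ)) := by
    have : ContinuousOn (fun lam : ℝ =>
        max ((2 * τ1 / lam) ^ ((1 : ℝ) / 3)) αmin + max (βof lam) βmin +
          max ((2 * τ4 / lam) ^ ((1 : ℝ) / 3)) γmin) (Set.Ioi (0:ℝ)) :=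
      ((hmaxc (hroot τ1)).add (hmaxc hβcont)).add (hmaxc (hroot τ4))
    exact this.congr fun x _ => hz x
  have htend0 : Filter.Tendsto z (nhdsWithin 0 (Set.Ioi (0 : ℝ))) Filter.atTop := by
    have hroot_top : Tendsto (fun lam : ℝ => (2 * τ1 / lam) ^ ((1:ℝ)/3))
        (nhdsWithin 0 (Set.Ioi (0:ℝ))) atTop := by
      have h1' : Tendsto (fun lam : ℝ => 2 * τ1 / lam) (nhdsWithin 0 (Set.Ioi (0:ℝ))) atTop := by
        have := tendsto_inv_nhdsGT_zero.const_mul_atTop (show (0:ℝ) < 2 * τ1 by positivity)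
        exact this.congr fun x => by rw [div_eq_mul_inv]
      exact (tendsto_rpow_atTop (by norm_num : (0:ℝ) < 1/3)).comp h1'
    apply tendsto_atTop_mono' _ _ hroot_top
    filter_upwards [self_mem_nhdsWithin] with lam hlam
    rw [hz]
    have a1 := le_max_left ((2 * τ1 / lam) ^ ((1:ℝ)/3)) αmin
    have a2 := le_max_right (βof lam) βmin
    have a3 := le_max_right ((2 * τ4 / lam) ^ ((1:ℝ)/3)) γmin
    linarith
  have hev : ∀ᶠ lam in atTop, z lam = αmin + βmin + γmin := by
    have e1 : ∀ᶠ lam : ℝ in atTop, (2 * τ1 / lam) ^ ((1:ℝ)/3) ≤ αmin := by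
      filter_upwards [eventually_ge_atTop (max 1 (2 * τ1 / αmin ^ 3))] with lam hlam
      have hl1 : (1:ℝ) ≤ lam := le_trans (le_max_left _ _) hlam
      have hlampos : (0:ℝ) < lam := by linarith
      have hl2 : 2 * τ1 / αmin ^ 3 ≤ lam := le_trans (le_max_right _ _) hlam
      have hp3 : (0:ℝ) < αmin ^ 3 := by positivity
      have h2' : 2 * τ1 ≤ lam * αmin ^ 3 := (div_le_iff₀ hp3).mp hl2
      have h3' : 2 * τ1 / lam ≤ αmin ^ 3 := (div_le_iff₀ hlampos).mpr (by linarith)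
      calc (2 * τ1 / lam) ^ ((1:ℝ)/3) ≤ (αmin ^ 3) ^ ((1:ℝ)/3) :=
            Real.rpow_le_rpow (by positivity) h3' (by norm_num)
        _ = αmin := by
            rw [← Real.rpow_natCast αmin 3, ← Real.rpow_mul hαmin.le]
            norm_num
    have e4 : ∀ᶠ lam : ℝ in atTop, (2 * τ4 / lam) ^ ((1:ℝ)/3) ≤ γmin := by
      filter_upwards [eventually_ge_atTop (max 1 (2 * τ4 / γmin ^ 3))] with lam hlam
      have hl1 : (1:ℝ) ≤ lam := le_trans (le_max_left _ _) hlam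
      have hlampos : (0:ℝ) < lam := by linarith
      have hl2 : 2 * τ4 / γmin ^ 3 ≤ lam := le_trans (le_max_right _ _) hlam
      have hp3 : (0:ℝ) < γmin ^ 3 := by positivity
      have h2' : 2 * τ4 ≤ lam * γmin ^ 3 := (div_le_iff₀ hp3).mp hl2
      have h3' : 2 * τ4 / lam ≤ γmin ^ 3 := (div_le_iff₀ hlampos).mpr (by linarith)
      calc (2 * τ4 / lam) ^ ((1:ℝ)/3) ≤ (γmin ^ 3) ^ ((1:ℝ)/3) :=
            Real.rpow_le_rpow (by positivity) h3' (by norm_num)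
        _ = γmin := by
            rw [← Real.rpow_natCast γmin 3, ← Real.rpow_mul hγmin.le]
            norm_num
    have e2 : ∀ᶠ lam : ℝ in atTop, βof lam ≤ βmin := by
      set U : ℝ := c / βmin with hU_def
      have hUpos : 0 < U := by positivity
      filter_upwards [eventually_ge_atTop (max 1 (τ2 * (1 - h U) + 1))] with lam hlam
      have hl1 : (1:ℝ) ≤ lam := le_trans (le_max_left _ _) hlam
      have hlampos : (0:ℝ) < lam := by linarith
      have hl2 : τ2 * (1 - h U) + 1 ≤ lam := le_trans (le_max_right _ _) hlam
      have h' : (1 - h U) * τ2 < lam := by nlinarith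
      have hdivlt : 1 - h U < lam / τ2 := (lt_div_iff₀ h2).mpr h'
      have hv : h (c / βof lam) < h U := by
        rw [heq lam hlampos]; linarith
      have hbl := hβpos lam hlampos
      have hmem1 : c / βof lam ∈ Set.Ici (0:ℝ) := Set.mem_Ici.mpr (by positivity)
      have hmem2 : U ∈ Set.Ici (0:ℝ) := Set.mem_Ici.mpr hUpos.le
      have hdiv : U < c / βof lam := (hA.lt_iff_gt hmem1 hmem2).mp hv
      rw [hU_def] at hdiv
      have := (div_lt_div_iff₀ hβmin hbl).mp hdiv
      exact (lt_of_mul_lt_mul_left (by linarith [this]) hc.le).le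
    filter_upwards [e1, e2, e4] with lam hl1 hl2 hl4
    rw [hz, max_eq_right hl1, max_eq_right hl4, max_eq_right hl2]
  have htendinf : Filter.Tendsto z Filter.atTop (nhds (αmin + βmin + γmin)) :=
    Tendsto.congr' (by filter_upwards [hev] with lam hl using hl.symm) tendsto_const_nhds
  refine ⟨hwcont, htend0, htendinf, ?_⟩
  -- existence of lam with z lam = 1
  obtain ⟨a, ha1, ha0⟩ := ((htend0.eventually_ge_atTop 1).and self_mem_nhdsWithin).exists
  have ha0' : (0:ℝ) < a := ha0
  obtain ⟨b, hb1, hab⟩ :=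
    ((htendinf.eventually_lt_const hsum).and (eventually_gt_atTop a)).exists
  have haleb : a ≤ b := hab.le
  have hzcont : ContinuousOn z (Set.Icc a b) :=
    hwcont.mono (fun x hx => lt_of_lt_of_le ha0' hx.1)
  have hmem : (1:ℝ) ∈ Set.Icc (z b) (z a) := ⟨hb1.le, ha1⟩
  obtain ⟨lam, hlam, hzlam⟩ := intermediate_value_Icc' haleb hzcont hmem
  exact ⟨lam, lt_of_lt_of_le ha0' hlam.1, hzlam⟩
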